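/- In a semi-FTvN system, if c is in the center (⟨c,y⟩ = ⟨λ(c), λ(y)⟩ for all y), then the λ-orbit of c is a singleton: λ(x) = λ(c) implies x = c. Consequently Ac = c for every automorphism A, and Dc = 0 for every D in the Lie algebra of the automorphism group. -/

import Mathlib

open scoped RealInnerProductSpace Matrix

set_option maxHeartbeats 1000000 in
set_option synthInstance.maxHeartbeats 1000000 in
theorem stmt12 {V W : Type*} [NormedAddCommGroup V] [InnerProductSpace ℝ V]
    [NormedAddCommGroup W] [InnerProductSpace ℝ W] (lam : V → W)
    (h1 : ∀ x : V, ‖lam x‖ = ‖x‖)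
    (h2 : ∀ x y : V, ⟪x, y⟫ ≤ ⟪lam x, lam y⟫)
    (c : V) (hc : ∀ y : V, ⟪c, y⟫ = ⟪lam c, lam y⟫) :
    (∀ x : V, lam x = lam c → x = c) ∧
    (∀ A : V →L[ℝ] V, Function.Bijective A → (∀ x : V, lam (A x) = lam x) → A c = c) ∧
    (∀ D : V →L[ℝ] V,
      (∀ t : ℝ, Function.Bijective ((NormedSpace.exp (t • D) : V →L[ℝ] V)) ∧
        ∀ x : V, lam ((NormedSpace.exp (t • D) : V →L[ℝ] V) x) = lam x) → D c = 0) := by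
  have key : ∀ x : V, lam x = lam c → x = c := by
    intro x hx
    have hn : ‖x‖ = ‖c‖ := by rw [← h1 x, hx, h1]
    have hcx : ⟪c, x⟫ = ‖c‖ ^ 2 := by
      rw [hc x, hx, real_inner_self_eq_norm_sq, h1]
    have hsq : ‖x - c‖ ^ 2 = 0 := by
      rw [norm_sub_sq_real, hn, real_inner_comm, hcx]; ring
    have h0 : x - c = 0 := norm_eq_zero.mp (sq_eq_zero_iff.mp hsq)
    exact sub_eq_zero.mp h0
  refine ⟨key, fun A _ hA => key _ (hA c), ?_⟩
  intro D hD
  by_cases hsum : ∀ t : ℝ, Summable (fun n : ℕ => ((n.factorial : ℝ)⁻¹) • (t • D) ^ n)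
  · -- main case
    have hec : ∀ t : ℝ, (NormedSpace.exp (t • D)) c = c := fun t => key _ ((hD t).2 c)
    obtain ⟨M, hM⟩ : ∃ M : ℝ, M = ‖D‖ := ⟨_, rfl⟩
    have hSsum : Summable (fun n : ℕ => M ^ n / n.factorial) := Real.summable_pow_div_factorial M
    obtain ⟨S, hS⟩ : ∃ S : ℝ, S = ∑' n : ℕ, M ^ n / n.factorial := ⟨_, rfl⟩
    have hS0 : 0 ≤ S := hS ▸ tsum_nonneg fun n => by
      have : (0:ℝ) ≤ M := hM ▸ norm_nonneg D
      positivity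
    obtain ⟨C, hC⟩ : ∃ C : ℝ, C = M ^ 2 * ‖c‖ * S := ⟨_, rfl⟩
    have hC0 : 0 ≤ C := by
      rw [hC]; exact mul_nonneg (by positivity) hS0
    have hbound : ∀ t : ℝ, |t| ≤ 1 → |t| * ‖D c‖ ≤ t ^ 2 * C := by
      intro t ht
      obtain ⟨f, hf⟩ : ∃ f : ℕ → V, f = fun n => ((n.factorial : ℝ)⁻¹ * t ^ n) • (D ^ n) c :=
        ⟨_, rfl⟩
      have hpt : ∀ n : ℕ, (((n.factorial : ℝ)⁻¹) • (t • D) ^ n) c = f n := by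
        intro n
        rw [hf, smul_pow, ContinuousLinearMap.smul_apply, ContinuousLinearMap.smul_apply,
          smul_smul]
      have happ : (NormedSpace.exp (t • D)) c = ∑' n : ℕ, f n := by
        rw [NormedSpace.exp_eq_tsum ℝ]
        refine ((ContinuousLinearMap.apply ℝ V c).map_tsum (hsum t)).trans ?_
        exact tsum_congr fun n => hpt n
      have hfs : Summable f := by
        have h := (hsum t).map (ContinuousLinearMap.apply ℝ V c)
          (ContinuousLinearMap.apply ℝ V c).continuous
        simpa only [Function.comp_def, ContinuousLinearMap.apply_apply, hpt] using h
      have hsplit : ∑' n, f n = f 0 + (f 1 + ∑' n, f (n + 2)) := by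
        rw [Summable.tsum_eq_zero_add hfs]
        congr 1
        have h1s : Summable fun n => f (n + 1) := (summable_nat_add_iff 1).2 hfs
        rw [Summable.tsum_eq_zero_add h1s]
      have hf0 : f 0 = c := by simp [hf]
      have hf1 : f 1 = t • D c := by simp [hf]
      have hzero : t • D c + ∑' n, f (n + 2) = 0 := by
        have hcc : c = c + (t • D c + ∑' n, f (n + 2)) := by
          conv_lhs => rw [← hec t]
          rw [happ, hsplit, hf0, hf1]
        exact (left_eq_add.mp hcc)
      have hR : t • D c = -∑' n, f (n + 2) := eq_neg_of_add_eq_zero_left hzero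
      have hterm : ∀ n : ℕ, ‖f (n + 2)‖ ≤ t ^ 2 * (M ^ 2 * ‖c‖) * (M ^ n / n.factorial) := by
        intro n
        have e2 : ‖(D ^ (n + 2)) c‖ ≤ M ^ (n + 2) * ‖c‖ := by
          calc ‖(D ^ (n + 2)) c‖ ≤ ‖D ^ (n + 2)‖ * ‖c‖ := (D ^ (n + 2)).le_opNorm c
            _ ≤ M ^ (n + 2) * ‖c‖ := by
                gcongr
                rw [hM]; exact norm_pow_le' D (by omega)
        have e3 : |t| ^ (n + 2) ≤ t ^ 2 := by
          calc |t| ^ (n + 2) ≤ |t| ^ 2 := pow_le_pow_of_le_one (abs_nonneg t) ht (by omega)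
            _ = t ^ 2 := sq_abs t
        have e4 : (((n + 2).factorial : ℝ))⁻¹ ≤ ((n.factorial : ℝ))⁻¹ := by
          apply inv_anti₀
          · positivity
          · exact_mod_cast Nat.factorial_le (by omega)
        have e1 : ‖f (n + 2)‖
            = (((n + 2).factorial : ℝ))⁻¹ * (|t| ^ (n + 2) * ‖(D ^ (n + 2)) c‖) := by
          simp [hf, norm_smul, abs_mul, abs_pow, abs_inv, Nat.abs_cast, mul_assoc]
        calc ‖f (n + 2)‖
            = (((n + 2).factorial : ℝ))⁻¹ * (|t| ^ (n + 2) * ‖(D ^ (n + 2)) c‖) := e1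
          _ ≤ ((n.factorial : ℝ))⁻¹ * (t ^ 2 * (M ^ (n + 2) * ‖c‖)) := by
              exact mul_le_mul e4
                (mul_le_mul e3 e2 (by positivity) (by positivity))
                (by positivity) (by positivity)
          _ = t ^ 2 * (M ^ 2 * ‖c‖) * (M ^ n / n.factorial) := by
              rw [pow_add]
              field_simp
      have hsum2 : Summable fun n => ‖f (n + 2)‖ :=
        Summable.of_nonneg_of_le (fun n => norm_nonneg _) hterm (hSsum.mul_left _)
      have hnormR : ‖∑' n, f (n + 2)‖ ≤ t ^ 2 * C := by
        have ha : ‖∑' n, f (n + 2)‖ ≤ ∑' n, ‖f (n + 2)‖ := norm_tsum_le_tsum_norm hsum2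
        have hb' : ∑' n, ‖f (n + 2)‖
            ≤ ∑' n, t ^ 2 * (M ^ 2 * ‖c‖) * (M ^ n / n.factorial) :=
          Summable.tsum_le_tsum hterm hsum2 (hSsum.mul_left (t ^ 2 * (M ^ 2 * ‖c‖)))
        have hcℝ : ∑' n, t ^ 2 * (M ^ 2 * ‖c‖) * (M ^ n / n.factorial) = t ^ 2 * C := by
          rw [tsum_mul_left, ← hS, hC]; ring
        linarith
      calc |t| * ‖D c‖ = ‖t • D c‖ := by rw [norm_smul, Real.norm_eq_abs]
        _ = ‖∑' n, f (n + 2)‖ := by rw [hR, norm_neg]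
        _ ≤ t ^ 2 * C := hnormR
    have hall : ∀ ε : ℝ, 0 < ε → ε ≤ 1 → ‖D c‖ ≤ ε * C := by
      intro ε hε0 hε1
      have h := hbound ε (by rw [abs_of_pos hε0]; exact hε1)
      rw [abs_of_pos hε0] at h
      have h' : ε * ‖D c‖ ≤ ε * (ε * C) := by
        calc ε * ‖D c‖ ≤ ε ^ 2 * C := h
          _ = ε * (ε * C) := by ring
      exact le_of_mul_le_mul_left h' hε0
    have hle : ‖D c‖ ≤ 0 := by
      have htend : Filter.Tendsto (fun ε : ℝ => ε * C) (nhdsWithin 0 (Set.Ioi 0)) (nhds 0) := by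
        have h' : Filter.Tendsto (fun ε : ℝ => ε * C) (nhds 0) (nhds (0 * C)) :=
          (continuous_id.mul continuous_const).tendsto 0
        simpa using h'.mono_left nhdsWithin_le_nhds
      refine ge_of_tendsto htend ?_
      filter_upwards [Ioc_mem_nhdsGT_of_mem (Set.left_mem_Ico.mpr one_pos)] with ε hε
      exact hall ε hε.1 hε.2
    exact norm_le_zero_iff.mp hle
  · push_neg at hsum
    obtain ⟨t, ht⟩ := hsum
    have hexp0 : NormedSpace.exp (t • D) = 0 := by
      rw [NormedSpace.exp_eq_tsum ℝ]
      exact tsum_eq_zero_of_not_summable ht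
    have hb := (hD t).1
    rw [hexp0] at hb
    have hsub : Subsingleton V := ⟨fun a b => hb.1 (by simp only [ContinuousLinearMap.zero_apply])⟩
    exact Subsingleton.elim _ _
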